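/- Let ℓ be a prime, m ≥ 1, and let H be a cyclic subgroup of order ℓ^m of the group (ℚ/ℤ)². Then for every integer k ≥ 0, the subgroup {x ∈ (ℚ/ℤ)² : ℓ^k · x ∈ H} is isomorphic as an abelian group to (ZMod ℓ^k) × (ZMod ℓ^{k+m}). -/

import Mathlib

private lemma qz_coe_eq_zero (q : ℚ) : ((q : ℚ) : AddCircle (1:ℚ)) = 0 ↔ ∃ n : ℤ, (n:ℚ) = q := by
  rw [AddCircle.coe_eq_zero_iff]; simp

private lemma qz_div_eq_zero (c N : ℤ) (hN : N ≠ 0) :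
    (((c:ℚ)/(N:ℚ)) : AddCircle (1:ℚ)) = 0 ↔ N ∣ c := by
  rw [qz_coe_eq_zero]
  constructor
  · rintro ⟨n, hn⟩
    refine ⟨n, ?_⟩
    have : (c : ℚ) = N * n := by
      field_simp at hn
      linarith [hn]
    exact_mod_cast this
  · rintro ⟨n, rfl⟩
    exact ⟨n, by push_cast; field_simp⟩

private lemma qz_exists_rep (N : ℤ) (hN : N ≠ 0) (z : AddCircle (1:ℚ)) (hz : N • z = 0) :
    ∃ c : ℤ, z = (((c:ℚ)/(N:ℚ)) : AddCircle (1:ℚ)) := by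
  obtain ⟨p, rfl⟩ := QuotientAddGroup.mk_surjective z
  rw [← QuotientAddGroup.mk_zsmul] at hz
  obtain ⟨n, hn⟩ := (qz_coe_eq_zero _).mp hz
  refine ⟨n, ?_⟩
  have : (n:ℚ)/(N:ℚ) = p := by
    rw [zsmul_eq_mul] at hn
    field_simp
    rw [hn]
  rw [this]

private lemma qz_aux (ℓ : ℕ) (hℓ : ℓ.Prime) (m k : ℕ) (a b : ℤ) (ha : ¬ (ℓ:ℤ) ∣ a) :
    Nonempty ((AddSubgroup.comap
        (DistribMulAction.toAddMonoidHom (AddCircle (1:ℚ) × AddCircle (1:ℚ)) ((ℓ:ℤ)^k))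
        (AddSubgroup.zmultiples
          ((((a:ℚ)/(ℓ:ℚ)^m : ℚ) : AddCircle (1:ℚ)), (((b:ℚ)/(ℓ:ℚ)^m : ℚ) : AddCircle (1:ℚ))))) ≃+
      (ZMod (ℓ^k) × ZMod (ℓ^(k+m)))) := by
  have hℓQ : (ℓ:ℚ) ≠ 0 := by exact_mod_cast hℓ.ne_zero
  have hpow : ∀ r : ℕ, ((ℓ:ℤ)^r : ℤ) ≠ 0 := fun r => pow_ne_zero r (by exact_mod_cast hℓ.ne_zero)
  -- basic computation lemmas
  have smul_div : ∀ (n c : ℤ) (r : ℕ),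
      n • ((((c:ℚ)/(ℓ:ℚ)^r) : ℚ) : AddCircle (1:ℚ)) = ((((n*c : ℤ):ℚ)/(ℓ:ℚ)^r : ℚ) : AddCircle (1:ℚ)) := by
    intro n c r
    rw [← QuotientAddGroup.mk_zsmul]
    congr 1
    rw [zsmul_eq_mul]
    push_cast
    ring
  have div_zero : ∀ (c : ℤ) (r : ℕ),
      ((((c:ℚ)/(ℓ:ℚ)^r) : ℚ) : AddCircle (1:ℚ)) = 0 ↔ (ℓ:ℤ)^r ∣ c := by
    intro c r
    have := qz_div_eq_zero c ((ℓ:ℤ)^r) (hpow r)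
    rw [← this]
    norm_cast
  have add_div : ∀ (c d : ℤ) (r : ℕ),
      ((((c:ℚ)/(ℓ:ℚ)^r) : ℚ) : AddCircle (1:ℚ)) + ((((d:ℚ)/(ℓ:ℚ)^r) : ℚ) : AddCircle (1:ℚ))
        = ((((c+d : ℤ):ℚ)/(ℓ:ℚ)^r : ℚ) : AddCircle (1:ℚ)) := by
    intro c d r
    rw [← QuotientAddGroup.mk_add]
    congr 1
    push_cast
    ring
  have eq_div : ∀ (c d : ℤ) (r : ℕ), (ℓ:ℤ)^r ∣ (c - d) →
      ((((c:ℚ)/(ℓ:ℚ)^r) : ℚ) : AddCircle (1:ℚ)) = ((((d:ℚ)/(ℓ:ℚ)^r) : ℚ) : AddCircle (1:ℚ)) := by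
    intro c d r hdvd
    rw [← sub_eq_zero, ← QuotientAddGroup.mk_sub]
    have : ((c:ℚ)/(ℓ:ℚ)^r - (d:ℚ)/(ℓ:ℚ)^r) = (((c - d : ℤ):ℚ)/(ℓ:ℚ)^r) := by push_cast; ring
    rw [this, div_zero]
    exact hdvd
  have up_div : ∀ (c : ℤ) (r s : ℕ),
      ((((c:ℚ)/(ℓ:ℚ)^r) : ℚ) : AddCircle (1:ℚ))
        = ((((ℓ^s*c : ℤ):ℚ)/(ℓ:ℚ)^(r+s) : ℚ) : AddCircle (1:ℚ)) := by
    intro c r s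
    congr 1
    push_cast
    rw [pow_add]
    field_simp
  set A := AddCircle (1:ℚ)
  set G := A × A
  set x₀ : G := ((((a:ℚ)/(ℓ:ℚ)^m : ℚ) : A), (((b:ℚ)/(ℓ:ℚ)^m : ℚ) : A)) with hx₀
  set K := AddSubgroup.comap (DistribMulAction.toAddMonoidHom G ((ℓ:ℤ)^k)) (AddSubgroup.zmultiples x₀) with hK
  have mem_K : ∀ x : G, x ∈ K ↔ (ℓ:ℤ)^k • x ∈ AddSubgroup.zmultiples x₀ := fun x => Iff.rfl
  -- generators
  set t : G := ((0 : A), ((((1:ℤ):ℚ)/(ℓ:ℚ)^k : ℚ) : A)) with htdef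
  set y : G := (((((a:ℤ):ℚ)/(ℓ:ℚ)^(k+m) : ℚ) : A), ((((b:ℤ):ℚ)/(ℓ:ℚ)^(k+m) : ℚ) : A)) with hydef
  have hsmul_t : ∀ n : ℤ, n • t = ((0 : A), ((((n:ℤ):ℚ)/(ℓ:ℚ)^k : ℚ) : A)) := by
    intro n
    rw [htdef, Prod.smul_def]
    simp only [smul_zero]
    rw [smul_div]
    norm_num
  have hsmul_y : ∀ n : ℤ,
      n • y = (((((n*a:ℤ):ℚ)/(ℓ:ℚ)^(k+m) : ℚ) : A), ((((n*b:ℤ):ℚ)/(ℓ:ℚ)^(k+m) : ℚ) : A)) := by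
    intro n
    rw [hydef, Prod.smul_def, smul_div, smul_div]
  have up_div' : ∀ (c : ℤ) (r s : ℕ),
      ((((c:ℚ)/(ℓ:ℚ)^r) : ℚ) : AddCircle (1:ℚ))
        = ((((ℓ^s*c : ℤ):ℚ)/(ℓ:ℚ)^(s+r) : ℚ) : AddCircle (1:ℚ)) := by
    intro c r s
    rw [up_div c r s, add_comm r s]
  have hy_x₀ : (ℓ:ℤ)^k • y = x₀ := by
    rw [hsmul_y, hx₀, up_div' a m k, up_div' b m k]
  have h0t : (ℓ:ℤ)^k • t = (0 : G) := by
    rw [hsmul_t]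
    have h2 : ((((((ℓ:ℤ)^k : ℤ):ℚ)/(ℓ:ℚ)^k) : ℚ) : A) = 0 := (div_zero _ _).mpr dvd_rfl
    rw [h2]
    rfl
  have h0y : (ℓ:ℤ)^(k+m) • y = (0 : G) := by
    rw [hsmul_y]
    have h1 := (div_zero ((ℓ:ℤ)^(k+m)*a) (k+m)).mpr (Dvd.intro _ rfl)
    have h2 := (div_zero ((ℓ:ℤ)^(k+m)*b) (k+m)).mpr (Dvd.intro _ rfl)
    rw [h1, h2]
    rfl
  have ht : t ∈ K := by
    rw [mem_K, h0t]
    exact AddSubgroup.zero_mem _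
  have hy : y ∈ K := by
    rw [mem_K, hy_x₀]
    exact AddSubgroup.mem_zmultiples x₀
  have hcast1 : ((ℓ^k : ℕ) : ℤ) = (ℓ:ℤ)^k := by push_cast; ring
  have hcast2 : ((ℓ^(k+m) : ℕ) : ℤ) = (ℓ:ℤ)^(k+m) := by push_cast; ring
  have ht_ord : ((ℓ^k : ℕ) : ℤ) • (⟨t, ht⟩ : K) = 0 := by
    apply Subtype.ext
    rw [AddSubgroup.coe_zsmul, hcast1]
    exact h0t
  have hy_ord : ((ℓ^(k+m) : ℕ) : ℤ) • (⟨y, hy⟩ : K) = 0 := by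
    apply Subtype.ext
    rw [AddSubgroup.coe_zsmul, hcast2]
    exact h0y
  let f : ZMod (ℓ^k) →+ K := ZMod.lift (ℓ^k) ⟨zmultiplesHom K ⟨t, ht⟩, by rw [zmultiplesHom_apply]; exact ht_ord⟩
  let g : ZMod (ℓ^(k+m)) →+ K := ZMod.lift (ℓ^(k+m)) ⟨zmultiplesHom K ⟨y, hy⟩, by rw [zmultiplesHom_apply]; exact hy_ord⟩
  let φ : ZMod (ℓ^k) × ZMod (ℓ^(k+m)) →+ K := AddMonoidHom.coprod f g
  have hφ : ∀ (c d : ℤ),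
      φ (((c : ℤ) : ZMod (ℓ^k)), ((d : ℤ) : ZMod (ℓ^(k+m)))) = c • (⟨t, ht⟩ : K) + d • (⟨y, hy⟩ : K) := by
    intro c d
    simp [φ, f, g]
  have hcop' : ∀ r : ℕ, ∀ d : ℤ, (ℓ:ℤ)^r ∣ d * a → (ℓ:ℤ)^r ∣ d := by
    intro r d hdvd
    exact ((((Nat.prime_iff_prime_int.mp hℓ).coprime_iff_not_dvd).mpr ha).pow_left).dvd_of_dvd_mul_right hdvd
  refine ⟨(AddEquiv.ofBijective φ ⟨?_, ?_⟩).symm⟩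
  · -- injectivity
    rw [injective_iff_map_eq_zero]
    rintro ⟨i, j⟩ hij
    obtain ⟨c, rfl⟩ := ZMod.intCast_surjective i
    obtain ⟨d, rfl⟩ := ZMod.intCast_surjective j
    rw [hφ] at hij
    have hval : c • t + d • y = (0 : G) := by
      have := congrArg (Subtype.val) hij
      simpa using this
    rw [hsmul_t, hsmul_y, Prod.mk_add_mk, Prod.mk_eq_zero] at hval
    obtain ⟨h1, h2⟩ := hval
    rw [zero_add] at h1
    have hd : (ℓ:ℤ)^(k+m) ∣ d := hcop' _ _ ((div_zero _ _).mp h1)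
    have hdb : ((((d*b:ℤ):ℚ)/(ℓ:ℚ)^(k+m) : ℚ) : A) = 0 := (div_zero _ _).mpr (hd.mul_right b)
    rw [hdb, add_zero] at h2
    have hc : (ℓ:ℤ)^k ∣ c := (div_zero _ _).mp h2
    rw [Prod.mk_eq_zero]
    constructor
    · exact (ZMod.intCast_zmod_eq_zero_iff_dvd c (ℓ^k)).mpr (by rw [hcast1]; exact hc)
    · exact (ZMod.intCast_zmod_eq_zero_iff_dvd d (ℓ^(k+m))).mpr (by rw [hcast2]; exact hd)
  · -- surjectivity
    rintro ⟨x, hx⟩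
    rw [mem_K, AddSubgroup.mem_zmultiples_iff] at hx
    obtain ⟨c, hc⟩ := hx
    set s : G := x - c • y with hs
    have hks : (ℓ:ℤ)^k • s = 0 := by
      rw [hs, smul_sub, smul_comm, hy_x₀, hc, sub_self]
    obtain ⟨a', ha'⟩ := qz_exists_rep ((ℓ:ℤ)^k) (hpow k) s.1 (by
      have := congrArg Prod.fst hks; exact (Prod.smul_fst _ _).symm.trans this)
    obtain ⟨b', hb'⟩ := qz_exists_rep ((ℓ:ℤ)^k) (hpow k) s.2 (by
      have := congrArg Prod.snd hks; exact (Prod.smul_snd _ _).symm.trans this)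
    have ha'' : s.1 = ((((a':ℤ):ℚ)/(ℓ:ℚ)^k : ℚ) : A) := by rw [ha']; norm_cast
    have hb'' : s.2 = ((((b':ℤ):ℚ)/(ℓ:ℚ)^k : ℚ) : A) := by rw [hb']; norm_cast
    obtain ⟨u, v, huv⟩ :=
      ((((Nat.prime_iff_prime_int.mp hℓ).coprime_iff_not_dvd).mpr ha).symm.pow_right (n := k))
    set e : ℤ := u * a' with he
    refine ⟨(((b' - e * b : ℤ) : ZMod (ℓ^k)), ((c + e * ℓ^m : ℤ) : ZMod (ℓ^(k+m)))), ?_⟩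
    apply Subtype.ext
    rw [hφ]
    show (b' - e * b) • t + (c + e * ℓ^m) • y = x
    have hxs : x = c • y + s := by rw [hs]; abel
    rw [hxs, hsmul_t, hsmul_y, hsmul_y, Prod.mk_add_mk, Prod.mk_add_mk]
    refine Prod.ext ?_ ?_
    · show (0:A) + _ = _
      rw [zero_add, ha'', up_div a' k m, add_div]
      apply eq_div
      refine ⟨-(v*a'), ?_⟩
      rw [he]
      linear_combination ((ℓ:ℤ)^m * a' : ℤ) * huv
    · rw [hb'', up_div b' k m, up_div (b'-e*b) k m, add_div, add_div]
      apply eq_div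
      refine ⟨0, ?_⟩
      ring


private lemma qz_swap (r : ℤ) (x₀ : AddCircle (1:ℚ) × AddCircle (1:ℚ)) :
    Nonempty ((AddSubgroup.comap
        (DistribMulAction.toAddMonoidHom (AddCircle (1:ℚ) × AddCircle (1:ℚ)) r)
        (AddSubgroup.zmultiples x₀)) ≃+
      (AddSubgroup.comap
        (DistribMulAction.toAddMonoidHom (AddCircle (1:ℚ) × AddCircle (1:ℚ)) r)
        (AddSubgroup.zmultiples x₀.swap))) := by
  let G := AddCircle (1:ℚ) × AddCircle (1:ℚ)
  let σ : G ≃+ G := AddEquiv.prodComm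
  have hmapeq : AddSubgroup.map (σ : G →+ G)
        (AddSubgroup.comap (DistribMulAction.toAddMonoidHom G r) (AddSubgroup.zmultiples x₀))
      = AddSubgroup.comap (DistribMulAction.toAddMonoidHom G r) (AddSubgroup.zmultiples x₀.swap) := by
    ext z
    simp only [AddSubgroup.mem_map, AddSubgroup.mem_comap, DistribMulAction.toAddMonoidHom_apply,
      AddSubgroup.mem_zmultiples_iff]
    constructor
    · rintro ⟨w, ⟨c, hc⟩, rfl⟩
      have hc' : c • x₀ = r • w := hc
      refine ⟨c, ?_⟩
      show c • Prod.swap x₀ = r • (σ w)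
      rw [← Prod.smul_swap, hc']
      show (r • w).swap = σ (r • w)
      rfl
    · rintro ⟨c, hc⟩
      have hc' : c • x₀.swap = r • z := hc
      refine ⟨σ.symm z, ⟨c, ?_⟩, by simp [σ]⟩
      show c • x₀ = r • (σ.symm z)
      have h2 : (c • x₀.swap).swap = (r • z).swap := by rw [hc']
      rw [Prod.smul_swap, Prod.swap_swap] at h2
      exact h2
  exact ⟨(σ.addSubgroupMap
      (AddSubgroup.comap (DistribMulAction.toAddMonoidHom G r) (AddSubgroup.zmultiples x₀))).trans
    (AddEquiv.addSubgroupCongr hmapeq)⟩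


private lemma qz_smul_div (ℓ : ℕ) (n c : ℤ) (r : ℕ) :
    n • ((((c:ℚ)/(ℓ:ℚ)^r) : ℚ) : AddCircle (1:ℚ))
      = ((((n*c : ℤ):ℚ)/(ℓ:ℚ)^r : ℚ) : AddCircle (1:ℚ)) := by
  rw [← QuotientAddGroup.mk_zsmul]
  congr 1
  rw [zsmul_eq_mul]
  push_cast
  ring

private lemma qz_div_zero (ℓ : ℕ) (hℓ : ℓ ≠ 0) (c : ℤ) (r : ℕ) :
    ((((c:ℚ)/(ℓ:ℚ)^r) : ℚ) : AddCircle (1:ℚ)) = 0 ↔ (ℓ:ℤ)^r ∣ c := by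
  have := qz_div_eq_zero c ((ℓ:ℤ)^r) (pow_ne_zero r (by exact_mod_cast hℓ))
  rw [← this]
  norm_cast

/-- Let `ℓ` be a prime, `m ≥ 1`, and `H` a cyclic subgroup of order `ℓ^m` of `(ℚ/ℤ)²`.
Then for every `k ≥ 0`, the subgroup `{x ∈ (ℚ/ℤ)² : ℓ^k · x ∈ H}` is isomorphic as an
abelian group to `ZMod ℓ^k × ZMod ℓ^{k+m}`. -/
theorem stmt_9 (ℓ m : ℕ) (hℓ : ℓ.Prime) (hm : 1 ≤ m)
    (H : AddSubgroup (AddCircle (1 : ℚ) × AddCircle (1 : ℚ)))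
    (hH : ∃ x : AddCircle (1 : ℚ) × AddCircle (1 : ℚ),
      addOrderOf x = ℓ ^ m ∧ H = AddSubgroup.zmultiples x)
    (k : ℕ) :
    Nonempty
      ((AddSubgroup.comap
          (DistribMulAction.toAddMonoidHom (AddCircle (1 : ℚ) × AddCircle (1 : ℚ))
            ((ℓ : ℤ) ^ k)) H) ≃+
        (ZMod (ℓ ^ k) × ZMod (ℓ ^ (k + m)))) := by
  obtain ⟨x₀, hord, rfl⟩ := hH
  have hpow : ((ℓ:ℤ)^m : ℤ) ≠ 0 := pow_ne_zero m (by exact_mod_cast hℓ.ne_zero)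
  have h0 : ((ℓ:ℤ)^m) • x₀ = 0 := by
    have h1 : (ℓ^m : ℕ) • x₀ = 0 := by rw [← hord]; exact addOrderOf_nsmul_eq_zero x₀
    rw [show ((ℓ:ℤ)^m) = ((ℓ^m : ℕ) : ℤ) by push_cast; ring, natCast_zsmul]
    exact h1
  obtain ⟨a, ha⟩ := qz_exists_rep ((ℓ:ℤ)^m) hpow x₀.1 (by
    have := congrArg Prod.fst h0; simpa [Prod.smul_def] using this)
  obtain ⟨b, hb⟩ := qz_exists_rep ((ℓ:ℤ)^m) hpow x₀.2 (by
    have := congrArg Prod.snd h0; simpa [Prod.smul_def] using this)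
  have hcast : (((ℓ:ℤ)^m : ℤ) : ℚ) = (ℓ:ℚ)^m := by push_cast; ring
  have hx₀pair : x₀ = ((((a:ℚ)/(ℓ:ℚ)^m : ℚ) : AddCircle (1:ℚ)),
      (((b:ℚ)/(ℓ:ℚ)^m : ℚ) : AddCircle (1:ℚ))) := by
    refine Prod.ext ?_ ?_
    · rw [ha, hcast]
    · rw [hb, hcast]
  have hm1 : m - 1 + 1 = m := Nat.succ_pred_eq_of_pos hm
  have hab : ¬ (ℓ:ℤ) ∣ a ∨ ¬ (ℓ:ℤ) ∣ b := by
    by_contra h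
    push_neg at h
    obtain ⟨⟨a₁, rfl⟩, ⟨b₁, rfl⟩⟩ := h
    have hpm : (ℓ:ℤ)^m = (ℓ:ℤ)^(m-1) * ℓ := by rw [← pow_succ, hm1]
    have hsm : ((ℓ:ℤ)^(m-1)) • x₀ = 0 := by
      rw [hx₀pair, Prod.smul_def, qz_smul_div, qz_smul_div]
      rw [Prod.mk_eq_zero]
      constructor
      · rw [qz_div_zero ℓ hℓ.ne_zero]
        exact ⟨a₁, by rw [hpm]; ring⟩
      · rw [qz_div_zero ℓ hℓ.ne_zero]
        exact ⟨b₁, by rw [hpm]; ring⟩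
    have hsm' : (ℓ^(m-1) : ℕ) • x₀ = 0 := by
      rwa [show ((ℓ:ℤ)^(m-1)) = ((ℓ^(m-1) : ℕ) : ℤ) by push_cast; ring, natCast_zsmul] at hsm
    have hdvd := addOrderOf_dvd_of_nsmul_eq_zero hsm'
    rw [hord] at hdvd
    have := (Nat.pow_dvd_pow_iff_le_right hℓ.one_lt).mp hdvd
    omega
  rw [hx₀pair]
  rcases hab with ha' | hb'
  · exact qz_aux ℓ hℓ m k a b ha'
  · obtain ⟨e1⟩ := qz_swap ((ℓ:ℤ)^k)
      ((((a:ℚ)/(ℓ:ℚ)^m : ℚ) : AddCircle (1:ℚ)), (((b:ℚ)/(ℓ:ℚ)^m : ℚ) : AddCircle (1:ℚ)))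
    obtain ⟨e2⟩ := qz_aux ℓ hℓ m k b a hb'
    exact ⟨e1.trans e2⟩
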